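/- Let S > 1, L ≥ S, and let Ω = {ω_1,...,ω_S} ⊂ 𝕋 be distinct. Let Φ_L(Ω) ∈ ℂ^{(L+1)×S} be the Vandermonde matrix with entries e^{-2πikω_j} for k = 0,...,L, let U ∈ ℂ^{(L+1)×S} have orthonormal columns spanning the column space of Φ_L, and let U₀ and U₁ be the submatrices of U obtained by deleting the last (resp. first) row. Then min(σ_S(U₀)², σ_S(U₁)²) ≥ 1 - S/σ_S(Φ_L)², where σ_S denotes the S-th (smallest) singular value. -/

import Mathlib

open scoped Matrix

/-- The smallest singular value of a complex matrix, defined as the infimum of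
`‖A v‖₂` over unit vectors `v` (Euclidean norms). -/
noncomputable def sigmaMin {m n : ℕ} (A : Matrix (Fin m) (Fin n) ℂ) : ℝ :=
  sInf {r : ℝ | ∃ v : Fin n → ℂ, (∑ j, ‖v j‖ ^ 2) = 1 ∧
    r = Real.sqrt (∑ i, ‖A.mulVec v i‖ ^ 2)}

private lemma mul_star_self (z : ℂ) : z * star z = ((‖z‖ ^ 2 : ℝ) : ℂ) := by
  rw [Complex.star_def, Complex.mul_conj]
  norm_cast
  rw [Complex.normSq_eq_norm_sq]

private lemma star_dot_self {m : ℕ} (w : Fin m → ℂ) :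
    star w ⬝ᵥ w = ((∑ i, ‖w i‖ ^ 2 : ℝ) : ℂ) := by
  simp only [dotProduct, Pi.star_apply]
  push_cast
  refine Finset.sum_congr rfl fun i _ => ?_
  rw [mul_comm, mul_star_self]
  push_cast
  ring

private lemma unitary_sum_sq {L1 S : ℕ} (U : Matrix (Fin L1) (Fin S) ℂ)
    (hUorth : Uᴴ * U = 1) (v : Fin S → ℂ) :
    (∑ i, ‖U.mulVec v i‖ ^ 2) = ∑ j, ‖v j‖ ^ 2 := by
  have h1 : star (U.mulVec v) ⬝ᵥ (U.mulVec v) = star v ⬝ᵥ v := by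
    rw [Matrix.star_mulVec, Matrix.dotProduct_mulVec, Matrix.vecMul_vecMul, hUorth,
      Matrix.vecMul_one]
  rw [star_dot_self, star_dot_self] at h1
  exact_mod_cast h1

private lemma norm_sum_mul_le {n : ℕ} (a b : Fin n → ℂ) :
    ‖∑ j, a j * b j‖ ≤ Real.sqrt (∑ j, ‖a j‖ ^ 2) * Real.sqrt (∑ j, ‖b j‖ ^ 2) := by
  have h1 : ‖∑ j, a j * b j‖ ≤ ∑ j, ‖a j‖ * ‖b j‖ :=
    (norm_sum_le _ _).trans_eq (Finset.sum_congr rfl fun j _ => norm_mul _ _)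
  refine h1.trans ?_
  have h2 := Finset.sum_mul_sq_le_sq_mul_sq Finset.univ (fun j => ‖a j‖) (fun j => ‖b j‖)
  have h0 : (0:ℝ) ≤ ∑ j, ‖a j‖ * ‖b j‖ := by positivity
  calc (∑ j, ‖a j‖ * ‖b j‖) = Real.sqrt ((∑ j, ‖a j‖ * ‖b j‖) ^ 2) := (Real.sqrt_sq h0).symm
    _ ≤ Real.sqrt ((∑ j, ‖a j‖ ^ 2) * ∑ j, ‖b j‖ ^ 2) := Real.sqrt_le_sqrt h2
    _ = _ := Real.sqrt_mul (by positivity) _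

private lemma exists_unit {S : ℕ} (hS : 0 < S) :
    ∃ v : Fin S → ℂ, (∑ j, ‖v j‖ ^ 2) = 1 := by
  refine ⟨fun j => if j = ⟨0, hS⟩ then 1 else 0, ?_⟩
  rw [Finset.sum_eq_single (⟨0, hS⟩ : Fin S)]
  · simp
  · intro b _ hb; simp [hb]
  · simp

private lemma sigmaMin_bddBelow {m n : ℕ} (A : Matrix (Fin m) (Fin n) ℂ) :
    BddBelow {r : ℝ | ∃ v : Fin n → ℂ, (∑ j, ‖v j‖ ^ 2) = 1 ∧
      r = Real.sqrt (∑ i, ‖A.mulVec v i‖ ^ 2)} := by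
  refine ⟨0, fun r hr => ?_⟩
  obtain ⟨v, -, rfl⟩ := hr
  exact Real.sqrt_nonneg _

private lemma sigmaMin_le {m n : ℕ} (A : Matrix (Fin m) (Fin n) ℂ) (v : Fin n → ℂ)
    (hv : (∑ j, ‖v j‖ ^ 2) = 1) :
    sigmaMin A ≤ Real.sqrt (∑ i, ‖A.mulVec v i‖ ^ 2) := by
  unfold sigmaMin
  exact csInf_le (sigmaMin_bddBelow A) ⟨v, hv, rfl⟩

set_option maxHeartbeats 1000000 in
private lemma sigmaMin_mul_le {m n : ℕ} (A : Matrix (Fin m) (Fin n) ℂ) (c : Fin n → ℂ) :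
    sigmaMin A * Real.sqrt (∑ j, ‖c j‖ ^ 2) ≤ Real.sqrt (∑ i, ‖A.mulVec c i‖ ^ 2) := by
  by_cases hc : (∑ j, ‖c j‖ ^ 2) = 0
  · rw [hc, Real.sqrt_zero, mul_zero]; exact Real.sqrt_nonneg _
  · have hpos : 0 < ∑ j, ‖c j‖ ^ 2 := lt_of_le_of_ne (by positivity) (Ne.symm hc)
    set t := Real.sqrt (∑ j, ‖c j‖ ^ 2) with ht
    have htpos : 0 < t := Real.sqrt_pos.mpr hpos
    set v : Fin n → ℂ := ((t⁻¹ : ℝ) : ℂ) • c with hv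
    have hveq : ∀ j, ‖v j‖ ^ 2 = (t⁻¹) ^ 2 * ‖c j‖ ^ 2 := by
      intro j
      rw [hv]
      simp [norm_smul, mul_pow, abs_of_pos (inv_pos.mpr htpos)]
    have hv1 : (∑ j, ‖v j‖ ^ 2) = 1 := by
      have e1 : (∑ j, ‖v j‖ ^ 2) = (t⁻¹) ^ 2 * ∑ j, ‖c j‖ ^ 2 := by
        rw [Finset.mul_sum]; exact Finset.sum_congr rfl fun j _ => hveq j
      have ht2 : t ^ 2 = ∑ j, ‖c j‖ ^ 2 := Real.sq_sqrt hpos.le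
      rw [e1, inv_pow, ht2, inv_mul_cancel₀ hc]
    have hble := sigmaMin_le A v hv1
    have hAv : A.mulVec v = ((t⁻¹ : ℝ) : ℂ) • A.mulVec c := by
      rw [hv, Matrix.mulVec_smul]
    have hsqrt : Real.sqrt (∑ i, ‖A.mulVec v i‖ ^ 2)
        = t⁻¹ * Real.sqrt (∑ i, ‖A.mulVec c i‖ ^ 2) := by
      have : ∀ i, ‖A.mulVec v i‖ ^ 2 = (t⁻¹) ^ 2 * ‖A.mulVec c i‖ ^ 2 := by
        intro i
        rw [hAv]
        simp [norm_smul, mul_pow, abs_of_pos (inv_pos.mpr htpos)]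
      have e2 : (∑ i, ‖A.mulVec v i‖ ^ 2) = (t⁻¹) ^ 2 * ∑ i, ‖A.mulVec c i‖ ^ 2 := by
        rw [Finset.mul_sum]; exact Finset.sum_congr rfl fun i _ => this i
      have hinv0 : (0:ℝ) ≤ t⁻¹ := (inv_pos.mpr htpos).le
      rw [e2, Real.sqrt_mul (sq_nonneg t⁻¹), Real.sqrt_sq hinv0]
    rw [hsqrt] at hble
    rw [mul_comm]
    calc t * sigmaMin A ≤ t * (t⁻¹ * Real.sqrt (∑ i, ‖A.mulVec c i‖ ^ 2)) :=
          mul_le_mul_of_nonneg_left hble htpos.le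
      _ = Real.sqrt (∑ i, ‖A.mulVec c i‖ ^ 2) := by
          rw [← mul_assoc, mul_inv_cancel₀ htpos.ne', one_mul]

set_option maxHeartbeats 1000000 in
private lemma row_bound {L S : ℕ} (hS : 0 < S)
    (Φ : Matrix (Fin (L + 1)) (Fin S) ℂ)
    (hΦnorm : ∀ k j, ‖Φ k j‖ = 1)
    (U : Matrix (Fin (L + 1)) (Fin S) ℂ)
    (hUorth : Uᴴ * U = 1)
    (hrange : LinearMap.range U.mulVecLin = LinearMap.range Φ.mulVecLin)
    (hσ : 0 < sigmaMin Φ)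
    (k : Fin (L + 1)) (ρ : Fin L → Fin (L + 1))
    (hsum : ∀ f : Fin (L + 1) → ℝ, ∑ i, f i = (∑ i : Fin L, f (ρ i)) + f k) :
    1 - (S : ℝ) / (sigmaMin Φ) ^ 2 ≤ (sigmaMin (U.submatrix ρ id)) ^ 2 := by
  set σ := sigmaMin Φ with hσdef
  set t := ∑ j, ‖U k j‖ ^ 2 with htdef
  have ht0 : 0 ≤ t := htdef ▸ (Finset.sum_nonneg fun j _ => sq_nonneg _)
  -- Step A : t ≤ S / σ^2
  have hA : t ≤ (S : ℝ) / σ ^ 2 := by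
    set w : Fin S → ℂ := fun j => star (U k j) with hw
    have hwnorm : (∑ j, ‖w j‖ ^ 2) = t := by simp [hw, htdef]
    set z := U.mulVec w with hz
    have hzk : z k = (t : ℂ) := by
      rw [hz]
      show (∑ j, U k j * w j) = (t : ℂ)
      rw [htdef]
      push_cast
      refine Finset.sum_congr rfl fun j _ => ?_
      rw [hw]
      rw [mul_star_self]
      push_cast; ring
    have hzmem : z ∈ LinearMap.range Φ.mulVecLin := by
      rw [← hrange]; exact ⟨w, rfl⟩
    obtain ⟨c, hc⟩ := hzmem
    have hc' : Φ.mulVec c = z := hc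
    have hQz : (∑ i, ‖z i‖ ^ 2) = t := by rw [hz, unitary_sum_sq U hUorth, hwnorm]
    have h1 : σ * Real.sqrt (∑ j, ‖c j‖ ^ 2) ≤ Real.sqrt t := by
      have h := sigmaMin_mul_le Φ c
      rw [hc', hQz] at h
      rw [mul_comm] at h ⊢
      exact h
    have h2 : t ≤ Real.sqrt S * Real.sqrt (∑ j, ‖c j‖ ^ 2) := by
      have heq : t = ‖z k‖ := by
        rw [hzk]
        simp [abs_of_nonneg ht0]
      rw [heq, ← hc']
      have hmv : Φ.mulVec c k = ∑ j, Φ k j * c j := rfl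
      rw [hmv]
      refine (norm_sum_mul_le _ _).trans ?_
      have hsq : (∑ j, ‖Φ k j‖ ^ 2) = (S : ℝ) := by
        simp [hΦnorm]
      rw [hsq]
    set q := Real.sqrt (∑ j, ‖c j‖ ^ 2) with hq
    have hq0 : 0 ≤ q := Real.sqrt_nonneg _
    have h1' : σ ^ 2 * q ^ 2 ≤ t := by
      have hh := mul_le_mul h1 h1 (mul_nonneg hσ.le (Real.sqrt_nonneg _)) (Real.sqrt_nonneg t)
      rw [Real.mul_self_sqrt ht0] at hh
      nlinarith
    have h2' : t ^ 2 ≤ (S : ℝ) * q ^ 2 := by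
      have hS0 : (0:ℝ) ≤ (S:ℝ) := Nat.cast_nonneg _
      have hh := mul_le_mul h2 h2 ht0 (mul_nonneg (Real.sqrt_nonneg _) hq0)
      nlinarith [Real.sq_sqrt hS0]
    rcases eq_or_lt_of_le ht0 with h | h
    · rw [← h]; positivity
    · rw [le_div_iff₀ (by positivity)]
      nlinarith [mul_le_mul_of_nonneg_left h1' (Nat.cast_nonneg S : (0:ℝ) ≤ (S:ℝ)),
        mul_le_mul_of_nonneg_right h2' (sq_nonneg σ), h]
  -- Step B
  have hB : ∀ v : Fin S → ℂ, (∑ j, ‖v j‖ ^ 2) = 1 →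
      1 - (S : ℝ) / σ ^ 2 ≤ ∑ i, ‖(U.submatrix ρ id).mulVec v i‖ ^ 2 := by
    intro v hv
    have hsub : ∀ i, (U.submatrix ρ id).mulVec v i = U.mulVec v (ρ i) := fun i => rfl
    have hfull : (∑ i, ‖U.mulVec v i‖ ^ 2) = 1 := by rw [unitary_sum_sq U hUorth, hv]
    have hksum : (∑ i : Fin L, ‖U.mulVec v (ρ i)‖ ^ 2) = 1 - ‖U.mulVec v k‖ ^ 2 := by
      have hh := hsum fun i => ‖U.mulVec v i‖ ^ 2
      rw [hfull] at hh
      linarith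
    have hCS : ‖U.mulVec v k‖ ^ 2 ≤ t := by
      have hmv : U.mulVec v k = ∑ j, U k j * v j := rfl
      have h := norm_sum_mul_le (fun j => U k j) v
      rw [← hmv] at h
      have h2 := pow_le_pow_left₀ (norm_nonneg _) h 2
      rw [mul_pow, Real.sq_sqrt (show (0:ℝ) ≤ ∑ j, ‖U k j‖ ^ 2 by positivity),
        Real.sq_sqrt (show (0:ℝ) ≤ ∑ j, ‖v j‖ ^ 2 by positivity), hv, mul_one] at h2
      rw [htdef]
      exact h2
    calc 1 - (S : ℝ) / σ ^ 2 ≤ 1 - t := by linarith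
      _ ≤ 1 - ‖U.mulVec v k‖ ^ 2 := by linarith
      _ = ∑ i : Fin L, ‖U.mulVec v (ρ i)‖ ^ 2 := hksum.symm
      _ = ∑ i, ‖(U.submatrix ρ id).mulVec v i‖ ^ 2 :=
          Finset.sum_congr rfl fun i _ => by rw [hsub]
  -- Step C
  by_cases hb : 1 - (S : ℝ) / σ ^ 2 ≤ 0
  · exact hb.trans (sq_nonneg _)
  push_neg at hb
  have hb0 : (0:ℝ) ≤ 1 - (S : ℝ) / σ ^ 2 := hb.le
  have hle : Real.sqrt (1 - (S : ℝ) / σ ^ 2) ≤ sigmaMin (U.submatrix ρ id) := by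
    unfold sigmaMin
    apply le_csInf
    · obtain ⟨v, hv⟩ := exists_unit hS
      exact ⟨_, v, hv, rfl⟩
    · rintro r ⟨v, hv, rfl⟩
      exact Real.sqrt_le_sqrt (hB v hv)
  calc 1 - (S : ℝ) / σ ^ 2 = Real.sqrt (1 - (S : ℝ) / σ ^ 2) ^ 2 := (Real.sq_sqrt hb0).symm
    _ ≤ _ := pow_le_pow_left₀ (Real.sqrt_nonneg _) hle 2

/-- with `Φ_L` the `(L+1)×S` Vandermonde matrix with nodes `e^{-2πiω_j}`,
`U` an orthonormal basis matrix for its column space and `U₀`, `U₁` the submatrices of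
the first resp. last `L` rows of `U`, one has
`min(σ_S(U₀)², σ_S(U₁)²) ≥ 1 - S/σ_S(Φ_L)²`. -/
theorem sigmaMin_U0_U1_vandermonde_bound
    (L S : ℕ) (hS : 1 < S) (hLS : S ≤ L)
    (ω : Fin S → ℝ) (hω : ∀ j, ω j ∈ Set.Ico (0 : ℝ) 1)
    (hinj : Function.Injective ω)
    (Φ : Matrix (Fin (L + 1)) (Fin S) ℂ)
    (hΦ : ∀ (k : Fin (L + 1)) (j : Fin S),
      Φ k j = Complex.exp (-(2 * Real.pi * Complex.I) * (k : ℕ) * (ω j)))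
    (U : Matrix (Fin (L + 1)) (Fin S) ℂ)
    (hUorth : Uᴴ * U = 1)
    (hrange : LinearMap.range U.mulVecLin = LinearMap.range Φ.mulVecLin)
    (U₀ U₁ : Matrix (Fin L) (Fin S) ℂ)
    (hU₀ : U₀ = U.submatrix Fin.castSucc id)
    (hU₁ : U₁ = U.submatrix Fin.succ id) :
    1 - (S : ℝ) / (sigmaMin Φ) ^ 2 ≤ min ((sigmaMin U₀) ^ 2) ((sigmaMin U₁) ^ 2) := by
  have hS0 : 0 < S := by omega
  -- the nodes
  set x : Fin S → ℂ := fun j => Complex.exp (-(2 * Real.pi * Complex.I) * (ω j)) with hxdef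
  have hx : ∀ (k : Fin (L + 1)) (j : Fin S), Φ k j = x j ^ (k : ℕ) := by
    intro k j
    rw [hΦ, hxdef, ← Complex.exp_nat_mul]
    congr 1
    push_cast
    ring
  have hΦnorm : ∀ (k : Fin (L + 1)) (j : Fin S), ‖Φ k j‖ = 1 := by
    intro k j
    rw [hΦ]
    have heq : -(2 * (Real.pi : ℂ) * Complex.I) * ((k : ℕ) : ℂ) * ((ω j : ℝ) : ℂ)
        = ((-(2 * Real.pi * (k : ℕ) * ω j) : ℝ) : ℂ) * Complex.I := by
      push_cast
      ring
    rw [heq, Complex.norm_exp_ofReal_mul_I]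
  have hxinj : Function.Injective x := by
    intro a b hab
    rw [hxdef] at hab
    simp only at hab
    rw [Complex.exp_eq_exp_iff_exists_int] at hab
    obtain ⟨n, hn⟩ := hab
    have hπI : (2 * (Real.pi : ℂ) * Complex.I) ≠ 0 := by
      simp [Real.pi_ne_zero, Complex.I_ne_zero]
    have hkey : (2 * (Real.pi : ℂ) * Complex.I) * (((ω b : ℝ) : ℂ) - ((ω a : ℝ) : ℂ))
        = (2 * (Real.pi : ℂ) * Complex.I) * (n : ℂ) := by
      linear_combination hn
    have h3 : ((ω b : ℝ) : ℂ) - ((ω a : ℝ) : ℂ) = (n : ℂ) := mul_left_cancel₀ hπI hkey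
    have h4 : ω b - ω a = (n : ℝ) := by exact_mod_cast h3
    obtain ⟨ha0, ha1⟩ := hω a
    obtain ⟨hb0, hb1⟩ := hω b
    have h5 : |(n : ℝ)| < 1 := by
      rw [← h4, abs_lt]
      constructor <;> linarith
    have h5a : -1 < (n : ℝ) ∧ (n : ℝ) < 1 := abs_lt.mp h5
    have h6a : -1 < n := by exact_mod_cast h5a.1
    have h6b : n < 1 := by exact_mod_cast h5a.2
    have hn0 : n = 0 := by omega
    have : ω a = ω b := by
      rw [hn0] at h4
      push_cast at h4
      linarith
    exact hinj this
  -- injectivity of Φ.mulVec on kernel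
  have hmvinj : ∀ c : Fin S → ℂ, Φ.mulVec c = 0 → c = 0 := by
    intro c hc
    set M : Matrix (Fin S) (Fin S) ℂ := (Matrix.vandermonde x).transpose with hM
    have hMdet : IsUnit M.det := by
      rw [hM, Matrix.det_transpose]
      exact (Matrix.det_vandermonde_ne_zero_iff.mpr hxinj).isUnit
    have hMc : M.mulVec c = 0 := by
      funext k
      have hk := congrFun hc (Fin.castLE (by omega) k)
      show (∑ j, M k j * c j) = 0
      have hMkj : ∀ j, M k j = x j ^ (k : ℕ) := fun j => rfl
      have hΦkj : ∀ j, Φ (Fin.castLE (by omega : S ≤ L + 1) k) j = x j ^ (k : ℕ) := by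
        intro j
        rw [hx]
        simp
      calc (∑ j, M k j * c j) = ∑ j, Φ (Fin.castLE (by omega : S ≤ L + 1) k) j * c j :=
            Finset.sum_congr rfl fun j _ => by rw [hMkj, hΦkj]
        _ = 0 := hk
    have hfin : M⁻¹.mulVec (M.mulVec c) = c := by
      rw [Matrix.mulVec_mulVec, Matrix.nonsing_inv_mul M hMdet, Matrix.one_mulVec]
    rw [hMc, Matrix.mulVec_zero] at hfin
    exact hfin.symm
  -- positivity of the smallest singular value of Φ via compactness
  have hσ : 0 < sigmaMin Φ := by
    let E := EuclideanSpace ℂ (Fin S)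
    let F := EuclideanSpace ℂ (Fin (L + 1))
    let f : E →ₗ[ℂ] F :=
      { toFun := fun v => WithLp.toLp 2 (Φ.mulVec v)
        map_add' := fun a b => congrArg (WithLp.toLp 2) (Matrix.mulVec_add Φ a b)
        map_smul' := fun c a => congrArg (WithLp.toLp 2) (Matrix.mulVec_smul Φ c a) }
    have hfc : Continuous f := f.continuous_of_finiteDimensional
    have hsphere : IsCompact (Metric.sphere (0:E) 1) := isCompact_sphere _ _
    have hne : (Metric.sphere (0:E) 1).Nonempty := by
      refine ⟨EuclideanSpace.single ⟨0, hS0⟩ (1:ℂ), ?_⟩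
      rw [Metric.mem_sphere, dist_zero_right, EuclideanSpace.norm_single]
      exact norm_one
    obtain ⟨v₀, hv₀mem, hmin⟩ := hsphere.exists_isMinOn hne
      ((continuous_norm.comp hfc).continuousOn)
    have hv₀norm : ‖v₀‖ = 1 := by
      simpa using hv₀mem
    have hv₀ne : v₀ ≠ (0:E) := by
      intro h
      rw [h] at hv₀norm
      simp at hv₀norm
    have hfv₀ : 0 < ‖f v₀‖ := by
      rw [norm_pos_iff]
      intro h0
      have h1 : Φ *ᵥ v₀.ofLp = 0 := congrArg (WithLp.ofLp (p := 2)) h0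
      exact hv₀ne (by ext i; exact congrFun (hmvinj _ h1) i)
    refine lt_of_lt_of_le hfv₀ ?_
    unfold sigmaMin
    apply le_csInf
    · obtain ⟨v, hv⟩ := exists_unit hS0
      exact ⟨_, v, hv, rfl⟩
    · rintro r ⟨v, hv, rfl⟩
      have hvmem : (WithLp.toLp 2 v : E) ∈ Metric.sphere (0:E) 1 := by
        rw [Metric.mem_sphere, dist_zero_right, EuclideanSpace.norm_eq]
        change Real.sqrt (∑ i, ‖v i‖ ^ 2) = 1
        rw [hv, Real.sqrt_one]
      have hle := isMinOn_iff.mp hmin _ hvmem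
      have heq : Real.sqrt (∑ i, ‖Φ.mulVec v i‖ ^ 2) = ‖f (WithLp.toLp 2 v : E)‖ := by
        rw [EuclideanSpace.norm_eq]
        rfl
      rw [heq]
      exact hle
  -- conclude
  rw [hU₀, hU₁]
  apply le_min
  · exact row_bound hS0 Φ hΦnorm U hUorth hrange hσ (Fin.last L) Fin.castSucc
      (fun f => Fin.sum_univ_castSucc f)
  · exact row_bound hS0 Φ hΦnorm U hUorth hrange hσ 0 Fin.succ
      (fun f => by rw [Fin.sum_univ_succ]; ring)
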